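/- arXiv:2403.03208 — 4 statements merged into one kernel-verified Lean document; each statement's English description precedes it below -/
import Mathlib

section
/- The variance of the active mean estimator increment satisfies Var(f(X) + (Y − f(X))·ξ/π(X)) = Var(Y) + E[(Y − f(X))²·(1/π(X) − 1)], where ξ | (X,Y) ~ Bernoulli(π(X)). -/
open MeasureTheory ProbabilityTheory ENNReal

def mXY {Ω 𝒳 : Type*} [MeasurableSpace 𝒳] (X : Ω → 𝒳) (Y : Ω → ℝ) : MeasurableSpace Ω :=
  MeasurableSpace.comap (fun ω => (X ω, Y ω)) inferInstance

lemma bern_lintegral_aux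
    {Ω 𝒳 : Type*} [mΩ : MeasurableSpace Ω] [MeasurableSpace 𝒳]
    (μ : Measure Ω) [IsProbabilityMeasure μ]
    (X : Ω → 𝒳) (Y : Ω → ℝ) (ξ : Ω → ℝ) (π : 𝒳 → ℝ)
    (hX : Measurable X) (hYmeas : Measurable Y) (hξmeas : Measurable ξ)
    (hπ : Measurable π)
    (hπ01 : ∀ x, π x ∈ Set.Ioc (0 : ℝ) 1)
    (hξ01 : ∀ ω, ξ ω = 0 ∨ ξ ω = 1)
    (hBern : μ[ξ | MeasurableSpace.comap (fun ω => (X ω, Y ω)) inferInstance]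
        =ᵐ[μ] fun ω => π (X ω))
    (h : Ω → ℝ≥0∞)
    (hh : Measurable[mXY X Y] h) :
    ∫⁻ ω, h ω * ENNReal.ofReal (ξ ω) ∂μ = ∫⁻ ω, h ω * ENNReal.ofReal (π (X ω)) ∂μ := by
  have hm : mXY X Y ≤ mΩ := (hX.prodMk hYmeas).comap_le
  haveI : IsFiniteMeasure (μ.trim hm) := isFiniteMeasure_trim hm
  have hBern' : μ[ξ | mXY X Y] =ᵐ[μ] fun ω => π (X ω) := hBern
  have hξint : Integrable ξ μ := by
    refine (integrable_const (1 : ℝ)).mono' hξmeas.aestronglyMeasurable ?_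
    filter_upwards with ω
    rcases hξ01 ω with hc | hc <;> simp [hc]
  have hπint : Integrable (fun ω => π (X ω)) μ := by
    refine (integrable_const (1 : ℝ)).mono' (hπ.comp hX).aestronglyMeasurable ?_
    filter_upwards with ω
    rw [Real.norm_eq_abs, abs_of_pos (hπ01 (X ω)).1]
    exact (hπ01 (X ω)).2
  have hA : MeasurableSet (ξ ⁻¹' {1}) := hξmeas (measurableSet_singleton 1)
  have hξ_ind : ∀ ω, ξ ω = (ξ ⁻¹' {1}).indicator (fun _ => (1 : ℝ)) ω := by
    intro ω
    rcases hξ01 ω with hc | hc <;>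
      simp [Set.indicator_apply, Set.mem_preimage, hc]
  have hp_meas : Measurable (fun ω => ENNReal.ofReal (π (X ω))) :=
    ENNReal.measurable_ofReal.comp (hπ.comp hX)
  have hp_le_one : ∀ ω, ENNReal.ofReal (π (X ω)) ≤ 1 := by
    intro ω
    simpa using ENNReal.ofReal_le_one.2 (hπ01 (X ω)).2
  have key : (μ.restrict (ξ ⁻¹' {1})).trim hm
      = (μ.withDensity (fun ω => ENNReal.ofReal (π (X ω)))).trim hm := by
    refine @Measure.ext Ω (mXY X Y) _ _ fun s hs => ?_
    have hs' : MeasurableSet s := hm s hs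
    rw [trim_measurableSet_eq hm hs, trim_measurableSet_eq hm hs,
      Measure.restrict_apply hs', withDensity_apply _ hs']
    have h1 : ∫ ω in s, ξ ω ∂μ = ∫ ω in s, π (X ω) ∂μ :=
      (setIntegral_condExp hm hξint hs).symm.trans
        (integral_congr_ae (ae_restrict_of_ae hBern'))
    have h2 : ∫ ω in s, ξ ω ∂μ = (μ (s ∩ ξ ⁻¹' {1})).toReal := by
      rw [integral_congr_ae (Filter.Eventually.of_forall fun ω => hξ_ind ω)]
      rw [show ((ξ ⁻¹' {1}).indicator fun _ => (1:ℝ)) = (ξ ⁻¹' {1}).indicator 1 from rfl]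
      rw [integral_indicator_one hA, measureReal_restrict_apply hA, Set.inter_comm, measureReal_def]
    have h3 : ENNReal.ofReal (∫ ω in s, π (X ω) ∂μ)
        = ∫⁻ ω in s, ENNReal.ofReal (π (X ω)) ∂μ := by
      refine ofReal_integral_eq_lintegral_ofReal hπint.restrict ?_
      filter_upwards with ω using (hπ01 (X ω)).1.le
    have : μ (s ∩ ξ ⁻¹' {1}) = ENNReal.ofReal ((μ (s ∩ ξ ⁻¹' {1})).toReal) :=
      (ENNReal.ofReal_toReal (measure_ne_top μ _)).symm
    rw [this, ← h2, h1, h3]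
  have hhm : Measurable h := hh.mono hm le_rfl
  calc ∫⁻ ω, h ω * ENNReal.ofReal (ξ ω) ∂μ
      = ∫⁻ ω, (ξ ⁻¹' {1}).indicator h ω ∂μ := by
        refine lintegral_congr fun ω => ?_
        rw [hξ_ind ω]
        by_cases hω : ω ∈ ξ ⁻¹' {1} <;> simp [Set.indicator_apply, hω]
    _ = ∫⁻ ω in ξ ⁻¹' {1}, h ω ∂μ := lintegral_indicator hA h
    _ = ∫⁻ ω, h ω ∂((μ.restrict (ξ ⁻¹' {1})).trim hm) := (lintegral_trim hm hh).symm
    _ = ∫⁻ ω, h ω ∂((μ.withDensity (fun ω => ENNReal.ofReal (π (X ω)))).trim hm) := by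
        rw [key]
    _ = ∫⁻ ω, h ω ∂(μ.withDensity (fun ω => ENNReal.ofReal (π (X ω)))) :=
        lintegral_trim hm hh
    _ = ∫⁻ ω, ((fun ω => ENNReal.ofReal (π (X ω))) * h) ω ∂μ :=
        lintegral_withDensity_eq_lintegral_mul μ hp_meas hhm
    _ = ∫⁻ ω, h ω * ENNReal.ofReal (π (X ω)) ∂μ := by
        refine lintegral_congr fun ω => ?_
        simp [mul_comm]

lemma bern_integral_aux_nn
    {Ω 𝒳 : Type*} [mΩ : MeasurableSpace Ω] [MeasurableSpace 𝒳]
    (μ : Measure Ω) [IsProbabilityMeasure μ]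
    (X : Ω → 𝒳) (Y : Ω → ℝ) (ξ : Ω → ℝ) (π : 𝒳 → ℝ)
    (hX : Measurable X) (hYmeas : Measurable Y) (hξmeas : Measurable ξ)
    (hπ : Measurable π)
    (hπ01 : ∀ x, π x ∈ Set.Ioc (0 : ℝ) 1)
    (hξ01 : ∀ ω, ξ ω = 0 ∨ ξ ω = 1)
    (hBern : μ[ξ | MeasurableSpace.comap (fun ω => (X ω, Y ω)) inferInstance]
        =ᵐ[μ] fun ω => π (X ω))
    (h : Ω → ℝ) (hh : Measurable[mXY X Y] h) (hpos : ∀ ω, 0 ≤ h ω)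
    (hint : Integrable (fun ω => h ω * π (X ω)) μ) :
    Integrable (fun ω => h ω * ξ ω) μ ∧
      ∫ ω, h ω * ξ ω ∂μ = ∫ ω, h ω * π (X ω) ∂μ := by
  have hm : mXY X Y ≤ mΩ := (hX.prodMk hYmeas).comap_le
  have hhm : Measurable h := hh.mono hm le_rfl
  have hξnn : ∀ ω, 0 ≤ ξ ω := by
    intro ω; rcases hξ01 ω with hc | hc <;> simp [hc]
  have hπnn : ∀ ω, 0 ≤ π (X ω) := fun ω => (hπ01 (X ω)).1.le
  have hL := bern_lintegral_aux μ X Y ξ π hX hYmeas hξmeas hπ hπ01 hξ01 hBern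
    (fun ω => ENNReal.ofReal (h ω)) (ENNReal.measurable_ofReal.comp hh)
  have hL' : ∫⁻ ω, ENNReal.ofReal (h ω * ξ ω) ∂μ
      = ∫⁻ ω, ENNReal.ofReal (h ω * π (X ω)) ∂μ := by
    calc ∫⁻ ω, ENNReal.ofReal (h ω * ξ ω) ∂μ
        = ∫⁻ ω, ENNReal.ofReal (h ω) * ENNReal.ofReal (ξ ω) ∂μ :=
          lintegral_congr fun ω => ENNReal.ofReal_mul (hpos ω)
      _ = ∫⁻ ω, ENNReal.ofReal (h ω) * ENNReal.ofReal (π (X ω)) ∂μ := hL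
      _ = ∫⁻ ω, ENNReal.ofReal (h ω * π (X ω)) ∂μ :=
          (lintegral_congr fun ω => ENNReal.ofReal_mul (hpos ω)).symm
  have hmeasξ : AEStronglyMeasurable (fun ω => h ω * ξ ω) μ :=
    (hhm.mul hξmeas).aestronglyMeasurable
  have hintξ : Integrable (fun ω => h ω * ξ ω) μ := by
    refine ⟨hmeasξ, ?_⟩
    rw [hasFiniteIntegral_iff_ofReal
      (Filter.Eventually.of_forall fun ω => mul_nonneg (hpos ω) (hξnn ω)), hL']
    rw [← hasFiniteIntegral_iff_ofReal
      (Filter.Eventually.of_forall fun ω => mul_nonneg (hpos ω) (hπnn ω))]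
    exact hint.hasFiniteIntegral
  refine ⟨hintξ, ?_⟩
  rw [integral_eq_lintegral_of_nonneg_ae
      (Filter.Eventually.of_forall fun ω => mul_nonneg (hpos ω) (hξnn ω)) hmeasξ,
    integral_eq_lintegral_of_nonneg_ae
      (Filter.Eventually.of_forall fun ω => mul_nonneg (hpos ω) (hπnn ω))
      hint.aestronglyMeasurable, hL']

lemma bern_integral_aux
    {Ω 𝒳 : Type*} [mΩ : MeasurableSpace Ω] [MeasurableSpace 𝒳]
    (μ : Measure Ω) [IsProbabilityMeasure μ]
    (X : Ω → 𝒳) (Y : Ω → ℝ) (ξ : Ω → ℝ) (π : 𝒳 → ℝ)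
    (hX : Measurable X) (hYmeas : Measurable Y) (hξmeas : Measurable ξ)
    (hπ : Measurable π)
    (hπ01 : ∀ x, π x ∈ Set.Ioc (0 : ℝ) 1)
    (hξ01 : ∀ ω, ξ ω = 0 ∨ ξ ω = 1)
    (hBern : μ[ξ | MeasurableSpace.comap (fun ω => (X ω, Y ω)) inferInstance]
        =ᵐ[μ] fun ω => π (X ω))
    (h : Ω → ℝ) (hh : Measurable[mXY X Y] h)
    (hint : Integrable (fun ω => h ω * π (X ω)) μ) :
    Integrable (fun ω => h ω * ξ ω) μ ∧
      ∫ ω, h ω * ξ ω ∂μ = ∫ ω, h ω * π (X ω) ∂μ := by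
  have hπnn : ∀ ω, 0 ≤ π (X ω) := fun ω => (hπ01 (X ω)).1.le
  set hp : Ω → ℝ := fun ω => max (h ω) 0 with hp_def
  set hn : Ω → ℝ := fun ω => max (-h ω) 0 with hn_def
  have hhp : Measurable[mXY X Y] hp := hh.max measurable_const
  have hhn : Measurable[mXY X Y] hn := hh.neg.max measurable_const
  have habs : ∀ g : Ω → ℝ, (∀ ω, |g ω| ≤ |h ω|) → Measurable[mXY X Y] g →
      Integrable (fun ω => g ω * π (X ω)) μ := by
    intro g hg hgm
    refine hint.mono ((hgm.mono ((hX.prodMk hYmeas).comap_le) le_rfl).mul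
      (hπ.comp hX)).aestronglyMeasurable ?_
    filter_upwards with ω
    rw [Real.norm_eq_abs, Real.norm_eq_abs, abs_mul, abs_mul]
    exact mul_le_mul_of_nonneg_right (hg ω) (abs_nonneg _)
  have hintp := bern_integral_aux_nn μ X Y ξ π hX hYmeas hξmeas hπ hπ01 hξ01 hBern
    hp hhp (fun ω => le_max_right _ _)
    (habs hp (fun ω => by
      rw [abs_of_nonneg (le_max_right (h ω) 0)]
      exact max_le (le_abs_self _) (abs_nonneg _)) hhp)
  have hintn := bern_integral_aux_nn μ X Y ξ π hX hYmeas hξmeas hπ hπ01 hξ01 hBern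
    hn hhn (fun ω => le_max_right _ _)
    (habs hn (fun ω => by
      rw [abs_of_nonneg (le_max_right (-h ω) 0)]
      exact max_le (neg_le_abs _) (abs_nonneg _)) hhn)
  have hsplit : ∀ c : Ω → ℝ, (fun ω => h ω * c ω)
      = fun ω => hp ω * c ω - hn ω * c ω := by
    intro c; funext ω
    simp only [hp_def, hn_def, ← sub_mul, max_zero_sub_max_neg_zero_eq_self]
  constructor
  · rw [hsplit ξ]
    exact hintp.1.sub hintn.1
  · rw [hsplit ξ, hsplit (fun ω => π (X ω)), integral_sub hintp.1 hintn.1,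
      integral_sub (habs hp (fun ω => by
        rw [abs_of_nonneg (le_max_right (h ω) 0)]
        exact max_le (le_abs_self _) (abs_nonneg _)) hhp)
        (habs hn (fun ω => by
          rw [abs_of_nonneg (le_max_right (-h ω) 0)]
          exact max_le (neg_le_abs _) (abs_nonneg _)) hhn),
      hintp.2, hintn.2]

/-- **Variance of the active mean estimator increment.**
With `ξ | (X,Y) ~ Bernoulli(π(X))`,
`Var(f(X) + (Y − f(X))·ξ/π(X)) = Var(Y) + E[(Y − f(X))²·(1/π(X) − 1)]`. -/
theorem active_mean_estimator_variance
    {Ω 𝒳 : Type*} [MeasurableSpace Ω] [MeasurableSpace 𝒳]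
    (μ : Measure Ω) [IsProbabilityMeasure μ]
    (X : Ω → 𝒳) (Y : Ω → ℝ) (ξ : Ω → ℝ) (f : 𝒳 → ℝ) (π : 𝒳 → ℝ)
    (hX : Measurable X) (hYmeas : Measurable Y) (hξmeas : Measurable ξ)
    (hf : Measurable f) (hπ : Measurable π)
    (hπ01 : ∀ x, π x ∈ Set.Ioc (0 : ℝ) 1)
    (hξ01 : ∀ ω, ξ ω = 0 ∨ ξ ω = 1)
    -- ξ | (X, Y) ~ Bernoulli(π(X))
    (hBern : μ[ξ | MeasurableSpace.comap (fun ω => (X ω, Y ω)) inferInstance]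
        =ᵐ[μ] fun ω => π (X ω))
    (hY2 : MemLp Y 2 μ) (hf2 : MemLp (fun ω => f (X ω)) 2 μ)
    (hint : Integrable (fun ω => (Y ω - f (X ω)) ^ 2 / π (X ω)) μ) :
    variance (fun ω => f (X ω) + (Y ω - f (X ω)) * ξ ω / π (X ω)) μ
      = variance Y μ + ∫ ω, (Y ω - f (X ω)) ^ 2 * (1 / π (X ω) - 1) ∂μ := by
  have hm : mXY X Y ≤ ‹MeasurableSpace Ω› := (hX.prodMk hYmeas).comap_le
  have hπne : ∀ ω, π (X ω) ≠ 0 := fun ω => (hπ01 (X ω)).1.ne'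
  set W : Ω → ℝ := fun ω => (Y ω - f (X ω)) / π (X ω) with hW_def
  -- measurability with respect to σ(X, Y)
  have hgm : Measurable[mXY X Y] (fun ω => (X ω, Y ω)) :=
    measurable_iff_comap_le.mpr le_rfl
  have hWm : Measurable[mXY X Y] W :=
    ((measurable_snd.sub (hf.comp measurable_fst)).div (hπ.comp measurable_fst)).comp hgm
  have hfXm : Measurable[mXY X Y] (fun ω => f (X ω)) :=
    (hf.comp measurable_fst).comp hgm
  have hfWm : Measurable[mXY X Y] (fun ω => f (X ω) * W ω) := hfXm.mul hWm
  have hW2m : Measurable[mXY X Y] (fun ω => W ω ^ 2) := hWm.pow_const 2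
  -- basic integrabilities
  have hYint : Integrable Y μ := hY2.integrable one_le_two
  have hfint : Integrable (fun ω => f (X ω)) μ := hf2.integrable one_le_two
  have hYf2 : MemLp (fun ω => Y ω - f (X ω)) 2 μ := hY2.sub hf2
  have hYfint : Integrable (fun ω => Y ω - f (X ω)) μ := hYf2.integrable one_le_two
  have hYfsq : Integrable (fun ω => (Y ω - f (X ω)) ^ 2) μ := hYf2.integrable_sq
  have hfsq : Integrable (fun ω => f (X ω) ^ 2) μ := hf2.integrable_sq
  have hYsq : Integrable (fun ω => Y ω ^ 2) μ := hY2.integrable_sq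
  have hfyint : Integrable (fun ω => f (X ω) * (Y ω - f (X ω))) μ := by
    refine ((hfsq.add hYfsq).div_const 2).mono'
      (((hf.comp hX).mul (hYmeas.sub (hf.comp hX))).aestronglyMeasurable) ?_
    filter_upwards with ω
    rw [Real.norm_eq_abs, abs_mul]
    simp only [Pi.add_apply]
    nlinarith [sq_nonneg (|f (X ω)| - |Y ω - f (X ω)|), sq_abs (f (X ω)),
      sq_abs (Y ω - f (X ω)), abs_nonneg (f (X ω)), abs_nonneg (Y ω - f (X ω))]
  -- products with π(X)
  have hWπ : (fun ω => W ω * π (X ω)) = fun ω => Y ω - f (X ω) := by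
    funext ω; rw [hW_def]; exact div_mul_cancel₀ _ (hπne ω)
  have hW2π : (fun ω => W ω ^ 2 * π (X ω)) = fun ω => (Y ω - f (X ω)) ^ 2 / π (X ω) := by
    funext ω; rw [hW_def]; field_simp [hπne ω]
  have hfWπ : (fun ω => (f (X ω) * W ω) * π (X ω)) = fun ω => f (X ω) * (Y ω - f (X ω)) := by
    funext ω; rw [hW_def, mul_assoc, div_mul_cancel₀ _ (hπne ω)]
  -- the three conditional expectation computations
  have B1 := bern_integral_aux μ X Y ξ π hX hYmeas hξmeas hπ hπ01 hξ01 hBern W hWm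
    (by rw [hWπ]; exact hYfint)
  have B2 := bern_integral_aux μ X Y ξ π hX hYmeas hξmeas hπ hπ01 hξ01 hBern
    (fun ω => f (X ω) * W ω) hfWm (by rw [hfWπ]; exact hfyint)
  have B3 := bern_integral_aux μ X Y ξ π hX hYmeas hξmeas hπ hπ01 hξ01 hBern
    (fun ω => W ω ^ 2) hW2m (by rw [hW2π]; exact hint)
  have hB1e : ∫ ω, W ω * ξ ω ∂μ = ∫ ω, (Y ω - f (X ω)) ∂μ := by rw [B1.2, hWπ]
  have hB2e : ∫ ω, (f (X ω) * W ω) * ξ ω ∂μ = ∫ ω, f (X ω) * (Y ω - f (X ω)) ∂μ := by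
    rw [B2.2, hfWπ]
  have hB3e : ∫ ω, (W ω ^ 2) * ξ ω ∂μ = ∫ ω, (Y ω - f (X ω)) ^ 2 / π (X ω) ∂μ := by
    rw [B3.2, hW2π]
  -- L² membership of the estimator
  have hWξsq : (fun ω => (W ω * ξ ω) ^ 2) = fun ω => (W ω ^ 2) * ξ ω := by
    funext ω; rcases hξ01 ω with hc | hc <;> rw [hc] <;> ring
  have hWξ2 : MemLp (fun ω => W ω * ξ ω) 2 μ :=
    (memLp_two_iff_integrable_sq (f := fun ω => W ω * ξ ω)
      (((hWm.mono hm le_rfl).mul hξmeas).aestronglyMeasurable)).2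
      (by rw [hWξsq]; exact B3.1)
  have hZ2 : MemLp (fun ω => f (X ω) + W ω * ξ ω) 2 μ := hf2.add hWξ2
  have hZeq : (fun ω => f (X ω) + (Y ω - f (X ω)) * ξ ω / π (X ω))
      = fun ω => f (X ω) + W ω * ξ ω := by
    funext ω; rw [hW_def, mul_div_right_comm]
  -- mean of the estimator
  have hEZ : ∫ ω, (f (X ω) + W ω * ξ ω) ∂μ = ∫ ω, Y ω ∂μ := by
    rw [integral_add hfint B1.1, hB1e, integral_sub hYint hfint]; ring
  -- second moment of the estimator
  have hsq_pt : (fun ω => (f (X ω) + W ω * ξ ω) ^ 2)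
      = fun ω => f (X ω) ^ 2 + (2 * ((f (X ω) * W ω) * ξ ω) + (W ω ^ 2) * ξ ω) := by
    funext ω; rcases hξ01 ω with hc | hc <;> rw [hc] <;> ring
  have hI1 : Integrable (fun ω => 2 * (f (X ω) * W ω * ξ ω)) μ := B2.1.const_mul 2
  have hI2 : Integrable (fun ω => W ω ^ 2 * ξ ω) μ := B3.1
  have hI12 : Integrable (fun ω => 2 * (f (X ω) * W ω * ξ ω) + W ω ^ 2 * ξ ω) μ :=
    hI1.add hI2
  have hI3 : Integrable (fun ω => 2 * (f (X ω) * (Y ω - f (X ω)))) μ := hfyint.const_mul 2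
  have hEZ2 : ∫ ω, (f (X ω) + W ω * ξ ω) ^ 2 ∂μ
      = ∫ ω, Y ω ^ 2 ∂μ
        + (∫ ω, (Y ω - f (X ω)) ^ 2 / π (X ω) ∂μ - ∫ ω, (Y ω - f (X ω)) ^ 2 ∂μ) := by
    rw [hsq_pt, integral_add hfsq hI12, integral_add hI1 hI2, integral_const_mul, hB2e, hB3e]
    have hptr : ∫ ω, (f (X ω) ^ 2 + 2 * (f (X ω) * (Y ω - f (X ω)))) ∂μ
        = ∫ ω, (Y ω ^ 2 - (Y ω - f (X ω)) ^ 2) ∂μ := by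
      refine integral_congr_ae (Filter.Eventually.of_forall fun ω => ?_)
      ring
    have h1 : ∫ ω, f (X ω) ^ 2 ∂μ + 2 * ∫ ω, f (X ω) * (Y ω - f (X ω)) ∂μ
        = ∫ ω, Y ω ^ 2 ∂μ - ∫ ω, (Y ω - f (X ω)) ^ 2 ∂μ := by
      rw [← integral_const_mul, ← integral_add hfsq hI3, hptr,
        integral_sub hYsq hYfsq]
    linarith [h1]
  -- right-hand side integral
  have hRHS : ∫ ω, (Y ω - f (X ω)) ^ 2 * (1 / π (X ω) - 1) ∂μ
      = ∫ ω, (Y ω - f (X ω)) ^ 2 / π (X ω) ∂μ - ∫ ω, (Y ω - f (X ω)) ^ 2 ∂μ := by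
    rw [← integral_sub hint hYfsq]
    refine integral_congr_ae (Filter.Eventually.of_forall fun ω => ?_)
    ring
  rw [hZeq, variance_eq_sub hZ2, variance_eq_sub hY2, hRHS]
  simp only [Pi.pow_apply]
  rw [hEZ2, hEZ]
  ring
end

section
/- Among all measurable sampling rules π : X → (0,1] satisfying the budget constraint E[π(X)] ≤ p, the objective E[(Y − f(X))²/π(X)] is minimized by π_opt(X) = p·√(E[(Y−f(X))²|X]) / E[√(E[(Y−f(X))²|X])], provided this rule takes values in (0,1]. -/
open MeasureTheory

/-- **Optimality of the oracle sampling rule `π_opt(X) ∝ √(E[(Y−f(X))²|X])`.**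
Let `g = √(E[(Y−f(X))²|X])` and `π_opt = p·g/E[g]`, assumed to take values in `(0,1]`.
Then among all sampling rules `π` with `0 < π(X) ≤ 1` a.s. and `E[π(X)] ≤ p`, the
objective `E[(Y−f(X))²/π(X)]` is minimized by `π_opt`, with minimum value `E[g]²/p`. -/
theorem oracle_sampling_rule_optimal
    {Ω 𝒳 : Type*} [MeasurableSpace Ω] [MeasurableSpace 𝒳]
    (μ : Measure Ω) [IsProbabilityMeasure μ]
    (X : Ω → 𝒳) (Y : Ω → ℝ) (f : 𝒳 → ℝ) (p : ℝ)
    (hX : Measurable X) (hY : Measurable Y) (hf : Measurable f)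
    (hp : p ∈ Set.Ioo (0 : ℝ) 1)
    -- g(X) = √(E[(Y − f(X))² | X])
    (g : Ω → ℝ)
    (hg : g = fun ω => Real.sqrt
      ((μ[(fun ω' => (Y ω' - f (X ω')) ^ 2) | MeasurableSpace.comap X inferInstance]) ω))
    (hgpos : 0 < ∫ ω, g ω ∂μ) (hgint : Integrable g μ)
    -- π_opt(X) = p·g(X)/E[g(X)], assumed to take values in (0,1]
    (πopt : Ω → ℝ)
    (hπopt : πopt = fun ω => p * g ω / ∫ ω', g ω' ∂μ)
    (hπopt1 : ∀ᵐ ω ∂μ, πopt ω ∈ Set.Ioc (0 : ℝ) 1)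
    (hoptint : Integrable (fun ω => (Y ω - f (X ω)) ^ 2 / πopt ω) μ) :
    (∀ π : 𝒳 → ℝ, Measurable π →
        (∀ᵐ ω ∂μ, π (X ω) ∈ Set.Ioc (0 : ℝ) 1) →
        (∫ ω, π (X ω) ∂μ) ≤ p →
        Integrable (fun ω => (Y ω - f (X ω)) ^ 2 / π (X ω)) μ →
        ∫ ω, (Y ω - f (X ω)) ^ 2 / πopt ω ∂μ
          ≤ ∫ ω, (Y ω - f (X ω)) ^ 2 / π (X ω) ∂μ) ∧
      ∫ ω, (Y ω - f (X ω)) ^ 2 / πopt ω ∂μ = (∫ ω, g ω ∂μ) ^ 2 / p := by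
  obtain ⟨hp0, hp1⟩ := hp
  set I : ℝ := ∫ ω, g ω ∂μ with hI
  set h : Ω → ℝ := fun ω => (Y ω - f (X ω)) ^ 2 with hh
  have hm : MeasurableSpace.comap X inferInstance ≤ _ := hX.comap_le
  haveI : SigmaFinite (μ.trim hm) := inferInstance
  have hXm : Measurable[MeasurableSpace.comap X inferInstance] X :=
    measurable_iff_comap_le.mpr le_rfl
  have hhmeas : Measurable h := ((hY.sub (hf.comp hX)).pow_const 2)
  have hhnn : ∀ ω, 0 ≤ h ω := fun ω => sq_nonneg _
  -- g nonneg and g > 0 a.e.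
  have hgnn : ∀ ω, 0 ≤ g ω := by intro ω; rw [hg]; exact Real.sqrt_nonneg _
  have hgpos_ae : ∀ᵐ ω ∂μ, 0 < g ω := by
    filter_upwards [hπopt1] with ω hω
    have h1 := hω.1
    rw [hπopt] at h1
    by_contra hc
    push_neg at hc
    have : p * g ω / I ≤ 0 := by
      apply div_nonpos_of_nonpos_of_nonneg _ hgpos.le
      nlinarith
    simp only at h1
    linarith
  -- πopt pos a.e.
  have hπopt_pos : ∀ᵐ ω ∂μ, 0 < πopt ω := hπopt1.mono fun ω hω => hω.1
  -- h integrable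
  have hhint : Integrable h μ := by
    refine hoptint.mono hhmeas.aestronglyMeasurable ?_
    filter_upwards [hπopt1] with ω hω
    rw [Real.norm_of_nonneg (hhnn ω), Real.norm_of_nonneg
      (div_nonneg (hhnn ω) hω.1.le)]
    rw [le_div_iff₀ hω.1]
    nlinarith [hhnn ω, hω.2, hω.1]
  -- m' = condexp, g² = m' a.e.
  set m' : Ω → ℝ := μ[h | MeasurableSpace.comap X inferInstance] with hm'
  have hm'nn : 0 ≤ᵐ[μ] m' := condExp_nonneg (ae_of_all _ hhnn)
  have hgsq : ∀ᵐ ω ∂μ, g ω ^ 2 = m' ω := by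
    filter_upwards [hm'nn] with ω hω
    rw [hg]; exact Real.sq_sqrt hω
  -- key pull-out lemma
  have key : ∀ w : Ω → ℝ, StronglyMeasurable[MeasurableSpace.comap X inferInstance] w →
      Integrable (fun ω => w ω * h ω) μ →
      (∫ ω, w ω * h ω ∂μ = ∫ ω, g ω ^ 2 * w ω ∂μ) ∧
        Integrable (fun ω => g ω ^ 2 * w ω) μ := by
    intro w hw hwh
    have e1 : μ[w * h | MeasurableSpace.comap X inferInstance] =ᵐ[μ] w * m' :=
      condExp_mul_of_stronglyMeasurable_left hw hwh hhint
    have e2 : (fun ω => g ω ^ 2 * w ω) =ᵐ[μ] μ[w * h | MeasurableSpace.comap X inferInstance] := by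
      filter_upwards [e1, hgsq] with ω h1 h2
      simp only [Pi.mul_apply] at h1 ⊢
      rw [h1, h2, mul_comm]
    have hint2 : Integrable (fun ω => g ω ^ 2 * w ω) μ :=
      integrable_condExp.congr e2.symm
    refine ⟨?_, hint2⟩
    calc ∫ ω, w ω * h ω ∂μ
        = ∫ ω, (μ[w * h | MeasurableSpace.comap X inferInstance]) ω ∂μ :=
          (integral_condExp hm).symm
      _ = ∫ ω, g ω ^ 2 * w ω ∂μ := (integral_congr_ae e2).symm
  -- value at πopt
  have hπopt_sm : StronglyMeasurable[MeasurableSpace.comap X inferInstance]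
      (fun ω => (πopt ω)⁻¹) := by
    have hgm : Measurable[MeasurableSpace.comap X inferInstance] g := by
      rw [hg]
      exact Real.continuous_sqrt.measurable.comp stronglyMeasurable_condExp.measurable
    rw [hπopt]
    exact (((measurable_const.mul hgm).div_const I).inv).stronglyMeasurable
  have hwopt : Integrable (fun ω => (πopt ω)⁻¹ * h ω) μ := by
    refine hoptint.congr (ae_of_all _ fun ω => ?_)
    simp [div_eq_mul_inv, mul_comm, hh]
  have keyopt := key _ hπopt_sm hwopt
  have hoptval : ∫ ω, h ω / πopt ω ∂μ = I ^ 2 / p := by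
    have e3 : (fun ω => h ω / πopt ω) =ᵐ[μ] fun ω => (πopt ω)⁻¹ * h ω :=
      ae_of_all _ fun ω => by simp [div_eq_mul_inv, mul_comm]
    rw [integral_congr_ae e3, keyopt.1]
    have e4 : (fun ω => g ω ^ 2 * (πopt ω)⁻¹) =ᵐ[μ] fun ω => (I / p) * g ω := by
      filter_upwards [hgpos_ae] with ω hω
      rw [hπopt]
      field_simp
    rw [integral_congr_ae e4, integral_const_mul]
    field_simp
    ring
  refine ⟨?_, hoptval⟩
  -- main inequality
  intro π hπ hπ01 hπbudget hπint
  set c : ℝ := I / p with hc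
  have hcpos : 0 < c := div_pos hgpos hp0
  have hπXm : StronglyMeasurable[MeasurableSpace.comap X inferInstance]
      (fun ω => (π (X ω))⁻¹) := ((hπ.comp hXm).inv).stronglyMeasurable
  have hwπ : Integrable (fun ω => (π (X ω))⁻¹ * h ω) μ := by
    refine hπint.congr (ae_of_all _ fun ω => ?_)
    simp [div_eq_mul_inv, mul_comm, hh]
  have keyπ := key _ hπXm hwπ
  -- π(X) integrable
  have hπXint : Integrable (fun ω => π (X ω)) μ := by
    refine Integrable.mono' (integrable_const 1) (hπ.comp hX).aestronglyMeasurable ?_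
    filter_upwards [hπ01] with ω hω
    rw [Real.norm_of_nonneg hω.1.le]; exact hω.2
  -- pointwise bound
  have hpt : ∀ᵐ ω ∂μ, 2 * c * g ω - c ^ 2 * π (X ω) ≤ g ω ^ 2 * (π (X ω))⁻¹ := by
    filter_upwards [hπ01] with ω hω
    have hπpos := hω.1
    have key2 : g ω ^ 2 * (π (X ω))⁻¹ - (2 * c * g ω - c ^ 2 * π (X ω))
        = (g ω - c * π (X ω)) ^ 2 * (π (X ω))⁻¹ := by
      field_simp
      ring
    nlinarith [sq_nonneg (g ω - c * π (X ω)), inv_nonneg.mpr hπpos.le,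
      mul_nonneg (sq_nonneg (g ω - c * π (X ω))) (inv_nonneg.mpr hπpos.le)]
  have hlhsint : Integrable (fun ω => 2 * c * g ω - c ^ 2 * π (X ω)) μ :=
    ((hgint.const_mul _).sub (hπXint.const_mul _))
  have hmono : ∫ ω, (2 * c * g ω - c ^ 2 * π (X ω)) ∂μ
      ≤ ∫ ω, g ω ^ 2 * (π (X ω))⁻¹ ∂μ := integral_mono_ae hlhsint keyπ.2 hpt
  have hlhsval : ∫ ω, (2 * c * g ω - c ^ 2 * π (X ω)) ∂μ
      = 2 * c * I - c ^ 2 * ∫ ω, π (X ω) ∂μ := by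
    rw [integral_sub (hgint.const_mul _) (hπXint.const_mul _),
      integral_const_mul, integral_const_mul]
  have hbudget2 : 2 * c * I - c ^ 2 * ∫ ω, π (X ω) ∂μ ≥ I ^ 2 / p := by
    have : c ^ 2 * ∫ ω, π (X ω) ∂μ ≤ c ^ 2 * p :=
      mul_le_mul_of_nonneg_left hπbudget (sq_nonneg c)
    have hcval : 2 * c * I - c ^ 2 * p = I ^ 2 / p := by
      rw [hc]; field_simp; ring
    linarith
  have hπval : ∫ ω, h ω / π (X ω) ∂μ = ∫ ω, g ω ^ 2 * (π (X ω))⁻¹ ∂μ := by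
    have e3 : (fun ω => h ω / π (X ω)) =ᵐ[μ] fun ω => (π (X ω))⁻¹ * h ω :=
      ae_of_all _ fun ω => by simp [div_eq_mul_inv, mul_comm]
    rw [integral_congr_ae e3, keyπ.1]
  calc ∫ ω, h ω / πopt ω ∂μ = I ^ 2 / p := hoptval
    _ ≤ 2 * c * I - c ^ 2 * ∫ ω, π (X ω) ∂μ := hbudget2
    _ = ∫ ω, (2 * c * g ω - c ^ 2 * π (X ω)) ∂μ := hlhsval.symm
    _ ≤ ∫ ω, g ω ^ 2 * (π (X ω))⁻¹ ∂μ := hmono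
    _ = ∫ ω, h ω / π (X ω) ∂μ := hπval.symm
end

section
/- If the sampling probabilities are allowed to depend on both X and Y, then the objective E[(Y − f(X))²/π̃(X,Y)] subject to E[π̃(X,Y)] ≤ p is minimized by π̃_opt(X,Y) = p·|Y − f(X)|/E[|Y − f(X)|], provided this takes values in (0,1]. -/
open MeasureTheory

/-- **Optimality of the label-dependent oracle rule `π̃_opt(X,Y) ∝ |Y − f(X)|`.**
If `π̃_opt(X,Y) = p·|Y − f(X)|/E|Y − f(X)|` takes values in `(0,1]`, then among all
rules `π̃` depending on `(X,Y)` with `0 < π̃(X,Y) ≤ 1` a.s. and `E[π̃(X,Y)] ≤ p`, the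
objective `E[(Y − f(X))²/π̃(X,Y)]` is minimized by `π̃_opt`, with minimum value
`(E|Y − f(X)|)²/p`. -/
theorem oracle_sampling_rule_optimal_xy
    {Ω 𝒳 : Type*} [MeasurableSpace Ω] [MeasurableSpace 𝒳]
    (μ : Measure Ω) [IsProbabilityMeasure μ]
    (X : Ω → 𝒳) (Y : Ω → ℝ) (f : 𝒳 → ℝ) (p : ℝ)
    (hX : Measurable X) (hY : Measurable Y) (hf : Measurable f)
    (hp : p ∈ Set.Ioo (0 : ℝ) 1)
    (habs_pos : 0 < ∫ ω, |Y ω - f (X ω)| ∂μ)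
    (habs_int : Integrable (fun ω => |Y ω - f (X ω)|) μ)
    -- π̃_opt(X,Y) = p·|Y − f(X)|/E|Y − f(X)|, assumed to take values in (0,1]
    (πopt : Ω → ℝ)
    (hπopt : πopt = fun ω => p * |Y ω - f (X ω)| / ∫ ω', |Y ω' - f (X ω')| ∂μ)
    (hπopt1 : ∀ᵐ ω ∂μ, πopt ω ∈ Set.Ioc (0 : ℝ) 1)
    (hoptint : Integrable (fun ω => (Y ω - f (X ω)) ^ 2 / πopt ω) μ) :
    (∀ π : 𝒳 × ℝ → ℝ, Measurable π →
        (∀ᵐ ω ∂μ, π (X ω, Y ω) ∈ Set.Ioc (0 : ℝ) 1) →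
        (∫ ω, π (X ω, Y ω) ∂μ) ≤ p →
        Integrable (fun ω => (Y ω - f (X ω)) ^ 2 / π (X ω, Y ω)) μ →
        ∫ ω, (Y ω - f (X ω)) ^ 2 / πopt ω ∂μ
          ≤ ∫ ω, (Y ω - f (X ω)) ^ 2 / π (X ω, Y ω) ∂μ) ∧
      ∫ ω, (Y ω - f (X ω)) ^ 2 / πopt ω ∂μ
        = (∫ ω, |Y ω - f (X ω)| ∂μ) ^ 2 / p := by
  have hp0 : (0:ℝ) < p := hp.1
  set A := ∫ ω, |Y ω - f (X ω)| ∂μ with hA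
  set c : ℝ := A / p with hc
  have hc0 : 0 < c := div_pos habs_pos hp0
  -- Equality part
  have heq : ∫ ω, (Y ω - f (X ω)) ^ 2 / πopt ω ∂μ = A ^ 2 / p := by
    have hcongr : (fun ω => (Y ω - f (X ω)) ^ 2 / πopt ω) =ᵐ[μ]
        (fun ω => |Y ω - f (X ω)| * c) := by
      filter_upwards [hπopt1] with ω hω
      have hpos : 0 < πopt ω := hω.1
      have habs : (0:ℝ) < |Y ω - f (X ω)| := by
        by_contra h
        push_neg at h
        have h0 : |Y ω - f (X ω)| = 0 := le_antisymm h (abs_nonneg _)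
        rw [hπopt] at hpos
        simp [h0, ← hA] at hpos
      have hsq : (Y ω - f (X ω)) ^ 2 = |Y ω - f (X ω)| ^ 2 := (sq_abs _).symm
      rw [hπopt]
      simp only [← hA, hsq, hc]
      field_simp
    rw [integral_congr_ae hcongr, integral_mul_const, hc]
    rw [← hA]
    field_simp
  refine ⟨fun π hπm hπ01 hπp hπint => ?_, heq⟩
  rw [heq]
  -- integrability of π(X,Y)
  have hπXYm : AEStronglyMeasurable (fun ω => π (X ω, Y ω)) μ :=
    (hπm.comp (hX.prodMk hY)).aestronglyMeasurable
  have hπXYint : Integrable (fun ω => π (X ω, Y ω)) μ := by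
    refine Integrable.mono' (integrable_const 1) hπXYm ?_
    filter_upwards [hπ01] with ω hω
    rw [Real.norm_eq_abs, abs_of_pos hω.1]
    exact hω.2
  -- pointwise bound: 2c|e| - c²π ≤ e²/π
  have hmono : ∀ᵐ ω ∂μ, 2 * c * |Y ω - f (X ω)| - c ^ 2 * π (X ω, Y ω)
      ≤ (Y ω - f (X ω)) ^ 2 / π (X ω, Y ω) := by
    filter_upwards [hπ01] with ω hω
    have hπpos : 0 < π (X ω, Y ω) := hω.1
    rw [le_div_iff₀ hπpos]
    nlinarith [sq_nonneg (|Y ω - f (X ω)| - c * π (X ω, Y ω)), sq_abs (Y ω - f (X ω)),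
      hπpos, sq_nonneg (Y ω - f (X ω))]
  have hgint : Integrable
      (fun ω => 2 * c * |Y ω - f (X ω)| - c ^ 2 * π (X ω, Y ω)) μ :=
    ((habs_int.const_mul (2 * c)).sub (hπXYint.const_mul (c ^ 2)))
  have hineq : ∫ ω, (2 * c * |Y ω - f (X ω)| - c ^ 2 * π (X ω, Y ω)) ∂μ
      ≤ ∫ ω, (Y ω - f (X ω)) ^ 2 / π (X ω, Y ω) ∂μ :=
    integral_mono_ae hgint hπint hmono
  have hcalc : ∫ ω, (2 * c * |Y ω - f (X ω)| - c ^ 2 * π (X ω, Y ω)) ∂μ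
      = 2 * c * A - c ^ 2 * ∫ ω, π (X ω, Y ω) ∂μ := by
    rw [integral_sub (habs_int.const_mul (2 * c)) (hπXYint.const_mul (c ^ 2)),
      integral_const_mul, integral_const_mul, ← hA]
  have hfinal : A ^ 2 / p ≤ 2 * c * A - c ^ 2 * ∫ ω, π (X ω, Y ω) ∂μ := by
    have h1 : c ^ 2 * ∫ ω, π (X ω, Y ω) ∂μ ≤ c ^ 2 * p :=
      mul_le_mul_of_nonneg_left hπp (sq_nonneg c)
    have h2 : 2 * c * A - c ^ 2 * p = A ^ 2 / p := by
      rw [hc]; field_simp; ring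
    linarith
  linarith [hineq, hcalc ▸ hineq]
end

section
/- For mean estimation under a sampling rule π̃ depending on (X,Y), if we additionally require π̃_opt ≤ 1, i.e., if p·|Y−f(X)|/E|Y−f(X)| ≤ 1 a.s., then the minimum value of the variance-relevant objective equals E[(Y−f(X))²/π̃_opt(X,Y)] = (E|Y−f(X)|)²/p, so the minimized asymptotic variance of the active estimator is (1/n)·(Var(Y) − E[(Y−f(X))²] + (E|Y−f(X)|)²/p). -/
open MeasureTheory ProbabilityTheory

/-- **Minimized variance under the label-dependent oracle rule.**
If `π̃_opt(X,Y) = p·|Y−f(X)|/E|Y−f(X)|` takes values in `(0,1]` a.s., then the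
variance-relevant objective attains the value
`E[(Y−f(X))²/π̃_opt(X,Y)] = (E|Y−f(X)|)²/p`, and hence the minimized variance of the
active mean estimator equals
`(1/n)·(Var(Y) − E[(Y−f(X))²] + (E|Y−f(X)|)²/p)`. -/
theorem oracle_rule_minimized_variance
    {Ω 𝒳 : Type*} [MeasurableSpace Ω] [MeasurableSpace 𝒳]
    (μ : Measure Ω) [IsProbabilityMeasure μ]
    (X : Ω → 𝒳) (Y : Ω → ℝ) (f : 𝒳 → ℝ) (p : ℝ) (n : ℕ)
    (hX : Measurable X) (hY : Measurable Y) (hf : Measurable f)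
    (hn : 0 < n) (hp : p ∈ Set.Ioo (0 : ℝ) 1)
    (hY2 : MemLp Y 2 μ)
    (hsq_int : Integrable (fun ω => (Y ω - f (X ω)) ^ 2) μ)
    (habs_pos : 0 < ∫ ω, |Y ω - f (X ω)| ∂μ)
    (πopt : Ω → ℝ)
    (hπopt : πopt = fun ω => p * |Y ω - f (X ω)| / ∫ ω', |Y ω' - f (X ω')| ∂μ)
    (hπopt1 : ∀ᵐ ω ∂μ, πopt ω ∈ Set.Ioc (0 : ℝ) 1) :
    ∫ ω, (Y ω - f (X ω)) ^ 2 / πopt ω ∂μ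
        = (∫ ω, |Y ω - f (X ω)| ∂μ) ^ 2 / p ∧
      (1 / (n : ℝ)) * (variance Y μ + ∫ ω, (Y ω - f (X ω)) ^ 2 * (1 / πopt ω - 1) ∂μ)
        = (1 / (n : ℝ)) * (variance Y μ - ∫ ω, (Y ω - f (X ω)) ^ 2 ∂μ
            + (∫ ω, |Y ω - f (X ω)| ∂μ) ^ 2 / p) := by
  set A : ℝ := ∫ ω, |Y ω - f (X ω)| ∂μ with hA
  have hp0 : (0 : ℝ) < p := hp.1
  have hA0 : A ≠ 0 := ne_of_gt habs_pos
  -- a.e. pointwise identity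
  have hae : ∀ᵐ ω ∂μ, (Y ω - f (X ω)) ^ 2 / πopt ω = (A / p) * |Y ω - f (X ω)| := by
    filter_upwards [hπopt1] with ω hω
    have hpos : 0 < πopt ω := hω.1
    have habs : |Y ω - f (X ω)| ≠ 0 := by
      intro h
      rw [hπopt] at hpos
      simp only [h, mul_zero, zero_div] at hpos
      exact lt_irrefl 0 hpos
    rw [hπopt]
    have h2 : (Y ω - f (X ω)) ^ 2 = |Y ω - f (X ω)| ^ 2 := (sq_abs _).symm
    rw [h2]
    field_simp
  -- integrability of |Y - f(X)| (bounded a.e. by A/p)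
  have hmeas : AEStronglyMeasurable (fun ω => |Y ω - f (X ω)|) μ :=
    ((hY.sub (hf.comp hX)).abs).aestronglyMeasurable
  have hbdd : ∀ᵐ ω ∂μ, ‖|Y ω - f (X ω)|‖ ≤ A / p := by
    filter_upwards [hπopt1] with ω hω
    have h1 : πopt ω ≤ 1 := hω.2
    rw [hπopt] at h1
    have : p * |Y ω - f (X ω)| / A ≤ 1 := h1
    rw [div_le_one habs_pos] at this
    rw [Real.norm_eq_abs, abs_abs, le_div_iff₀ hp0]
    linarith [this]
  have habsint : Integrable (fun ω => |Y ω - f (X ω)|) μ :=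
    (integrable_const (A / p)).mono' hmeas hbdd
  -- first statement
  have h1 : ∫ ω, (Y ω - f (X ω)) ^ 2 / πopt ω ∂μ = A ^ 2 / p := by
    rw [integral_congr_ae hae, integral_const_mul, ← hA]
    ring
  refine ⟨h1, ?_⟩
  -- integrability of the ratio
  have hratio : Integrable (fun ω => (Y ω - f (X ω)) ^ 2 / πopt ω) μ :=
    (habsint.const_mul (A / p)).congr (hae.mono fun ω h => h.symm)
  have h2 : ∫ ω, (Y ω - f (X ω)) ^ 2 * (1 / πopt ω - 1) ∂μ
      = (∫ ω, (Y ω - f (X ω)) ^ 2 / πopt ω ∂μ) - ∫ ω, (Y ω - f (X ω)) ^ 2 ∂μ := by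
    rw [← integral_sub hratio hsq_int]
    congr 1
    funext ω
    rw [mul_sub, mul_one, mul_one_div]
  rw [h2, h1]
  ring
end
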